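/- arXiv:1710.01220 — 3 statements merged into one kernel-verified Lean document; each statement's English description precedes it below -/
import Mathlib

section
/- Let a₀, b₀, c₀ and a₁, b₁, c₁ be real numbers with aᵢ² + bᵢcᵢ < 0 for i = 0, 1, let Aᵢ = [[aᵢ, bᵢ], [cᵢ, -aᵢ]] and ωᵢ = √(-(aᵢ² + bᵢcᵢ)). Then the supremum over all s, t ≥ 0 of |Tr(exp(sA₀)·exp(tA₁))| equals max(2, |Tr(A₀A₁)|/(ω₀ω₁)); that is, |Tr(exp(sA₀)·exp(tA₁))| ≤ max(2, |Tr(A₀A₁)|/(ω₀ω₁)) for all s, t ≥ 0, and this bound is attained for some s, t ≥ 0. -/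
set_option maxHeartbeats 1000000 in

lemma exp_formula_aux (a b c : ℝ) (h : a ^ 2 + b * c < 0) (ω : ℝ)
    (hω : ω = Real.sqrt (-(a ^ 2 + b * c))) (s : ℝ) :
    NormedSpace.exp (s • (!![a, b; c, -a] : Matrix (Fin 2) (Fin 2) ℝ)) =
      Real.cos (ω * s) • (1 : Matrix (Fin 2) (Fin 2) ℝ) +
        (Real.sin (ω * s) / ω) • !![a, b; c, -a] := by
  have hωpos : 0 < ω := hω ▸ Real.sqrt_pos.mpr (by linarith)
  have hωsq : ω ^ 2 = -(a ^ 2 + b * c) := by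
    rw [hω, Real.sq_sqrt (by linarith)]
  set A : Matrix (Fin 2) (Fin 2) ℝ := !![a, b; c, -a] with hA
  have hAA : A * A = (a ^ 2 + b * c) • (1 : Matrix (Fin 2) (Fin 2) ℝ) := by
    rw [hA]
    rw [show (!![a, b; c, -a] : Matrix (Fin 2) (Fin 2) ℝ) * !![a, b; c, -a] =
      !![a*a + b*c, a*b + b*(-a); c*a + (-a)*c, c*b + (-a)*(-a)] from by
        simp [Matrix.mul_fin_two]]
    ext i j
    fin_cases i <;> fin_cases j <;> simp <;> ring
  set J : Matrix (Fin 2) (Fin 2) ℝ := ω⁻¹ • A with hJ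
  have hJJ : J * J = -1 := by
    rw [hJ, Matrix.smul_mul, Matrix.mul_smul, hAA, smul_smul, smul_smul]
    have : ω⁻¹ * ω⁻¹ * (a ^ 2 + b * c) = -1 := by
      field_simp
      nlinarith
    rw [this, neg_one_smul]
  set φ : ℂ →ₐ[ℝ] Matrix (Fin 2) (Fin 2) ℝ := Complex.liftAux J hJJ with hφ
  have hφcont : Continuous φ := φ.toLinearMap.continuous_of_finiteDimensional
  have hx : s • A = φ ((ω * s) • Complex.I) := by
    rw [hφ, Complex.liftAux_apply]
    simp [hJ, smul_smul]
    rw [mul_comm ω s, mul_assoc]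
    rw [mul_inv_cancel₀ hωpos.ne', mul_one]
  letI : SeminormedRing (Matrix (Fin 2) (Fin 2) ℝ) := Matrix.linftyOpSemiNormedRing
  letI : NormedRing (Matrix (Fin 2) (Fin 2) ℝ) := Matrix.linftyOpNormedRing
  letI : NormedAlgebra ℝ (Matrix (Fin 2) (Fin 2) ℝ) := Matrix.linftyOpNormedAlgebra
  erw [hx, ← NormedSpace.map_exp (φ : ℂ →ₐ[ℝ] _) hφcont]
  have : NormedSpace.exp ((ω * s) • Complex.I) = Complex.exp (((ω * s : ℝ) : ℂ) * Complex.I) := by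
    rw [← Complex.exp_eq_exp_ℂ, Complex.real_smul]
  rw [this]
  have hre : (Complex.exp (((ω * s : ℝ) : ℂ) * Complex.I)).re = Real.cos (ω * s) :=
    Complex.exp_ofReal_mul_I_re _
  have him : (Complex.exp (((ω * s : ℝ) : ℂ) * Complex.I)).im = Real.sin (ω * s) :=
    Complex.exp_ofReal_mul_I_im _
  rw [hφ, Complex.liftAux_apply, hre, him, hJ, smul_smul]
  rw [Algebra.algebraMap_eq_smul_one, div_eq_mul_inv]

/-- For `Aᵢ = !![aᵢ, bᵢ; cᵢ, -aᵢ]` with `aᵢ² + bᵢcᵢ < 0` and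
`ωᵢ = √(-(aᵢ² + bᵢcᵢ))`, the supremum over `s, t ≥ 0` of
`|Tr(exp(sA₀)·exp(tA₁))|` equals `max 2 (|Tr(A₀A₁)| / (ω₀ω₁))`: the bound holds
for all `s, t ≥ 0` and is attained for some `s, t ≥ 0`. -/
theorem sup_abs_trace_exp_mul_exp
    (a₀ b₀ c₀ a₁ b₁ c₁ : ℝ)
    (h₀ : a₀ ^ 2 + b₀ * c₀ < 0) (h₁ : a₁ ^ 2 + b₁ * c₁ < 0)
    (A₀ A₁ : Matrix (Fin 2) (Fin 2) ℝ)
    (hA₀ : A₀ = !![a₀, b₀; c₀, -a₀]) (hA₁ : A₁ = !![a₁, b₁; c₁, -a₁])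
    (ω₀ ω₁ : ℝ)
    (hω₀ : ω₀ = Real.sqrt (-(a₀ ^ 2 + b₀ * c₀)))
    (hω₁ : ω₁ = Real.sqrt (-(a₁ ^ 2 + b₁ * c₁))) :
    (∀ s t : ℝ, 0 ≤ s → 0 ≤ t →
      |(NormedSpace.exp (s • A₀) * NormedSpace.exp (t • A₁)).trace| ≤
        max 2 (|(A₀ * A₁).trace| / (ω₀ * ω₁))) ∧
    ∃ s t : ℝ, 0 ≤ s ∧ 0 ≤ t ∧
      |(NormedSpace.exp (s • A₀) * NormedSpace.exp (t • A₁)).trace| =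
        max 2 (|(A₀ * A₁).trace| / (ω₀ * ω₁)) := by
  have hω₀pos : 0 < ω₀ := hω₀ ▸ Real.sqrt_pos.mpr (by linarith)
  have hω₁pos : 0 < ω₁ := hω₁ ▸ Real.sqrt_pos.mpr (by linarith)
  set τ : ℝ := (A₀ * A₁).trace with hτ
  set T : ℝ := τ / (ω₀ * ω₁) with hT
  have habs : |τ| / (ω₀ * ω₁) = |T| := by
    rw [hT, abs_div, abs_of_pos (by positivity : (0:ℝ) < ω₀ * ω₁)]
  have hval : ∀ s t : ℝ,
      (NormedSpace.exp (s • A₀) * NormedSpace.exp (t • A₁)).trace =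
        2 * (Real.cos (ω₀ * s) * Real.cos (ω₁ * t)) +
          Real.sin (ω₀ * s) * Real.sin (ω₁ * t) * T := by
    intro s t
    rw [hT, hτ, hA₀, hA₁, exp_formula_aux a₀ b₀ c₀ h₀ ω₀ hω₀ s,
      exp_formula_aux a₁ b₁ c₁ h₁ ω₁ hω₁ t]
    simp only [Matrix.trace_fin_two, Matrix.mul_apply, Fin.sum_univ_two,
      Matrix.add_apply, Matrix.smul_apply, Matrix.one_apply, Matrix.cons_val',
      Matrix.cons_val_zero, Matrix.cons_val_one, Matrix.head_cons,
      Matrix.head_fin_const, Matrix.empty_val', Matrix.cons_val_fin_one,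
      smul_eq_mul]
    norm_num
    field_simp
    ring
  constructor
  · intro s t _ _
    rw [hval s t, habs]
    set c := Real.cos (ω₀ * s)
    set σ := Real.sin (ω₀ * s)
    set c' := Real.cos (ω₁ * t)
    set σ' := Real.sin (ω₁ * t)
    have h1 : σ ^ 2 + c ^ 2 = 1 := Real.sin_sq_add_cos_sq _
    have h2 : σ' ^ 2 + c' ^ 2 = 1 := Real.sin_sq_add_cos_sq _
    have key : |c * c'| + |σ * σ'| ≤ 1 := by
      rw [abs_mul, abs_mul]
      nlinarith [sq_nonneg (|c| * |σ'| - |σ| * |c'|), sq_abs c, sq_abs c',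
        sq_abs σ, sq_abs σ', abs_nonneg c, abs_nonneg c', abs_nonneg σ,
        abs_nonneg σ']
    set M := max 2 |T| with hM
    have hM2 : (2:ℝ) ≤ M := le_max_left _ _
    have hMT : |T| ≤ M := le_max_right _ _
    calc |2 * (c * c') + σ * σ' * T| ≤ |2 * (c * c')| + |σ * σ' * T| :=
          abs_add_le _ _
      _ = 2 * |c * c'| + |σ * σ'| * |T| := by
          rw [abs_mul 2, abs_two, abs_mul (σ * σ')]
      _ ≤ M * |c * c'| + M * |σ * σ'| := by
          have h3 : 2 * |c * c'| ≤ M * |c * c'| :=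
            mul_le_mul_of_nonneg_right hM2 (abs_nonneg _)
          have h4 : |σ * σ'| * |T| ≤ |σ * σ'| * M :=
            mul_le_mul_of_nonneg_left hMT (abs_nonneg _)
          nlinarith
      _ = M * (|c * c'| + |σ * σ'|) := by ring
      _ ≤ M * 1 := mul_le_mul_of_nonneg_left key (by linarith)
      _ = M := mul_one M
  · rcases le_total (|τ| / (ω₀ * ω₁)) 2 with hc | hc
    · refine ⟨0, 0, le_refl _, le_refl _, ?_⟩
      rw [hval 0 0, max_eq_left hc]
      norm_num
    · refine ⟨Real.pi / (2 * ω₀), Real.pi / (2 * ω₁), by positivity, by positivity, ?_⟩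
      have e0 : ω₀ * (Real.pi / (2 * ω₀)) = Real.pi / 2 := by
        field_simp
      have e1 : ω₁ * (Real.pi / (2 * ω₁)) = Real.pi / 2 := by
        field_simp
      rw [hval, e0, e1, Real.cos_pi_div_two, Real.sin_pi_div_two,
        max_eq_right hc, habs]
      norm_num
end

section
/- Let ω₀ > 0, let A₀ = [[0, -ω₀], [ω₀, 0]], and let A₁ = [[a₁, b₁], [c₁, -a₁]] with a₁² + b₁c₁ < 0 and ω₁ = √(-(a₁² + b₁c₁)). If A₁ is not a scalar multiple of A₀, then |Tr(exp((π/(2ω₀))·A₀)·exp((π/(2ω₁))·A₁))| > 2. -/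
open Real

lemma special_sq (a b c : ℝ) :
    !![a, b; c, -a] * !![a, b; c, -a] = (a ^ 2 + b * c) • (1 : Matrix (Fin 2) (Fin 2) ℝ) := by
  ext i j
  fin_cases i <;> fin_cases j <;>
    simp [Matrix.mul_apply, Fin.sum_univ_two, Matrix.one_apply] <;> ring

lemma exp_of_sq (M : Matrix (Fin 2) (Fin 2) ℝ) (r : ℝ) (hr : 0 < r)
    (hM : M * M = (-(r ^ 2)) • (1 : Matrix (Fin 2) (Fin 2) ℝ)) :
    NormedSpace.exp M = (Real.cos r) • (1 : Matrix (Fin 2) (Fin 2) ℝ)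
      + (Real.sin r / r) • M := by
  have heven : ∀ k : ℕ, M ^ (2 * k) = ((-(r ^ 2)) ^ k) • (1 : Matrix (Fin 2) (Fin 2) ℝ) := by
    intro k
    rw [pow_mul, sq M, hM, smul_pow, one_pow]
  have hodd : ∀ k : ℕ, M ^ (2 * k + 1) = ((-(r ^ 2)) ^ k) • M := by
    intro k
    rw [pow_succ, heven, smul_mul_assoc, one_mul]
  rw [NormedSpace.exp_eq_tsum (𝕂 := ℝ)]
  refine HasSum.tsum_eq ?_
  refine HasSum.even_add_odd ?_ ?_
  · have h := (Real.hasSum_cos r).smul_const (1 : Matrix (Fin 2) (Fin 2) ℝ)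
    convert h using 2 with k
    · rfl
    rw [heven, smul_smul]
    congr 1
    rw [neg_pow, ← pow_mul]
    ring
  · have h := ((Real.hasSum_sin r).div_const r).smul_const M
    convert h using 2 with k
    · rfl
    rw [hodd, smul_smul]
    congr 1
    rw [neg_pow, ← pow_mul]
    have hf : ((Nat.factorial (2 * k + 1) : ℝ)) ≠ 0 := by positivity
    field_simp [hr.ne']
    ring

open Real in
/-- For `A₀ = !![0, -ω₀; ω₀, 0]` with `ω₀ > 0` and
`A₁ = !![a₁, b₁; c₁, -a₁]` with `a₁² + b₁c₁ < 0`, `ω₁ = √(-(a₁² + b₁c₁))`: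
if `A₁` is not a scalar multiple of `A₀`, then
`|Tr(exp((π/(2ω₀)) • A₀) · exp((π/(2ω₁)) • A₁))| > 2`. -/
theorem abs_trace_exp_gt_two_of_non_proportional
    (ω₀ : ℝ) (hω₀ : 0 < ω₀)
    (A₀ : Matrix (Fin 2) (Fin 2) ℝ) (hA₀ : A₀ = !![0, -ω₀; ω₀, 0])
    (a₁ b₁ c₁ : ℝ) (h₁ : a₁ ^ 2 + b₁ * c₁ < 0)
    (A₁ : Matrix (Fin 2) (Fin 2) ℝ) (hA₁ : A₁ = !![a₁, b₁; c₁, -a₁])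
    (ω₁ : ℝ) (hω₁ : ω₁ = Real.sqrt (-(a₁ ^ 2 + b₁ * c₁)))
    (hprop : ¬∃ γ : ℝ, A₁ = γ • A₀) :
    |(NormedSpace.exp ((π / (2 * ω₀)) • A₀) *
        NormedSpace.exp ((π / (2 * ω₁)) • A₁)).trace| > 2 := by
  have hπ : (0:ℝ) < π := Real.pi_pos
  have hω₁pos : 0 < ω₁ := by
    rw [hω₁]; exact Real.sqrt_pos.mpr (by linarith)
  have hω₁sq : ω₁ ^ 2 = -(a₁ ^ 2 + b₁ * c₁) := by
    rw [hω₁, sq_sqrt (by linarith)]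
  have hhalf : 0 < π / 2 := by positivity
  -- exponentials
  have hM₀ : ((π / (2 * ω₀)) • A₀) * ((π / (2 * ω₀)) • A₀)
      = (-( (π/2) ^ 2)) • (1 : Matrix (Fin 2) (Fin 2) ℝ) := by
    rw [hA₀, smul_mul_assoc, mul_smul_comm, smul_smul]
    have : !![(0:ℝ), -ω₀; ω₀, 0] = !![(0:ℝ), -ω₀; ω₀, -0] := by norm_num
    rw [this, special_sq, smul_smul]
    congr 1
    field_simp
    ring
  have hM₁ : ((π / (2 * ω₁)) • A₁) * ((π / (2 * ω₁)) • A₁)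
      = (-( (π/2) ^ 2)) • (1 : Matrix (Fin 2) (Fin 2) ℝ) := by
    rw [hA₁, smul_mul_assoc, mul_smul_comm, smul_smul, special_sq, smul_smul]
    congr 1
    have h4 : a₁ ^ 2 + b₁ * c₁ = -(ω₁ ^ 2) := by linarith
    rw [h4]
    field_simp
  have e₀ : NormedSpace.exp ((π / (2 * ω₀)) • A₀) = (2 / π) • ((π / (2 * ω₀)) • A₀) := by
    rw [exp_of_sq _ (π/2) hhalf hM₀, Real.cos_pi_div_two, Real.sin_pi_div_two, zero_smul,
      zero_add]
    norm_num
  have e₁ : NormedSpace.exp ((π / (2 * ω₁)) • A₁) = (2 / π) • ((π / (2 * ω₁)) • A₁) := by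
    rw [exp_of_sq _ (π/2) hhalf hM₁, Real.cos_pi_div_two, Real.sin_pi_div_two, zero_smul,
      zero_add]
    norm_num
  rw [e₀, e₁]
  have htr : (((2 / π) • ((π / (2 * ω₀)) • A₀)) * ((2 / π) • ((π / (2 * ω₁)) • A₁))).trace
      = (b₁ - c₁) / ω₁ := by
    rw [hA₀, hA₁]
    simp [Matrix.trace_fin_two, Matrix.mul_apply, Fin.sum_univ_two]
    field_simp
    ring
  rw [htr]
  -- key inequality
  have hkey : 0 < 4 * a₁ ^ 2 + (b₁ + c₁) ^ 2 := by
    rcases lt_or_eq_of_le (by positivity : (0:ℝ) ≤ 4 * a₁ ^ 2 + (b₁ + c₁) ^ 2) with h | h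
    · exact h
    · exfalso
      have ha : a₁ = 0 := by nlinarith [sq_nonneg a₁, sq_nonneg (b₁ + c₁)]
      have hbc : b₁ + c₁ = 0 := by nlinarith [sq_nonneg a₁, sq_nonneg (b₁ + c₁)]
      apply hprop
      refine ⟨-b₁ / ω₀, ?_⟩
      have hc : c₁ = -b₁ := by linarith
      rw [hA₁, hA₀]
      ext i j
      fin_cases i <;> fin_cases j <;>
        simp [ha, hc] <;> field_simp
  have hsq : (2 * ω₁) ^ 2 < (b₁ - c₁) ^ 2 := by nlinarith
  have habs : 2 * ω₁ < |b₁ - c₁| := by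
    refine lt_of_pow_lt_pow_left₀ 2 (abs_nonneg _) ?_
    rwa [sq_abs]
  rw [gt_iff_lt, abs_div, abs_of_pos hω₁pos, lt_div_iff₀ hω₁pos]
  linarith
end

section
/- Let A be a real 2×2 matrix having no real eigenvalue. Then there is no nonempty finite set S of one-dimensional linear subspaces of ℝ² such that for every t ≥ 0 and every subspace L ∈ S, the image of L under the matrix exponential exp(tA) again belongs to S. -/
open NormedSpace Matrix Set

/-- Derivative of `t ↦ exp (t • A) *ᵥ v`. -/
private lemma expDeriv (A : Matrix (Fin 2) (Fin 2) ℝ) (v : Fin 2 → ℝ) (t : ℝ) :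
    HasDerivAt (fun s : ℝ => (NormedSpace.exp (s • A)) *ᵥ v)
      ((NormedSpace.exp (t • A) * A) *ᵥ v) t := by
  letI : SeminormedRing (Matrix (Fin 2) (Fin 2) ℝ) := Matrix.linftyOpSemiNormedRing
  letI : NormedRing (Matrix (Fin 2) (Fin 2) ℝ) := Matrix.linftyOpNormedRing
  letI : NormedAlgebra ℝ (Matrix (Fin 2) (Fin 2) ℝ) := Matrix.linftyOpNormedAlgebra
  have hd := hasDerivAt_exp_smul_const (𝕂 := ℝ) A t
  let lv : Matrix (Fin 2) (Fin 2) ℝ →ₗ[ℝ] (Fin 2 → ℝ) :=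
    { toFun := fun M => M *ᵥ v
      map_add' := fun M N => Matrix.add_mulVec M N v
      map_smul' := fun c M => (Matrix.smul_mulVec c M v) }
  have := (lv.toContinuousLinearMap.hasFDerivAt
    (x := NormedSpace.exp (t • A))).comp_hasDerivAt t hd
  exact this

private lemma distinct_lines_inf {L L' : Submodule ℝ (Fin 2 → ℝ)}
    (hL : Module.finrank ℝ L = 1) (hL' : Module.finrank ℝ L' = 1) (hne : L ≠ L')
    {x : Fin 2 → ℝ} (hx : x ∈ L) (hx' : x ∈ L') : x = 0 := by
  by_contra hx0
  have hbot : L ⊓ L' ≠ ⊥ := fun hbot =>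
    hx0 (by simpa [hbot] using Submodule.mem_inf.mpr ⟨hx, hx'⟩)
  have h1 : 1 ≤ Module.finrank ℝ ↥(L ⊓ L') :=
    Nat.one_le_iff_ne_zero.mpr fun h0 => hbot (Submodule.finrank_eq_zero.mp h0)
  have e1 : L ⊓ L' = L := Submodule.eq_of_le_of_finrank_le inf_le_left (hL ▸ h1)
  have e2 : L ⊓ L' = L' := Submodule.eq_of_le_of_finrank_le inf_le_right (hL' ▸ h1)
  exact hne (e1 ▸ e2)

/-- If a real `2×2` matrix `A` has no real eigenvalue, then there is
no nonempty finite set of one-dimensional subspaces of `ℝ²` that is invariant under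
the exponentials `exp (t • A)` for all `t ≥ 0`. -/
theorem no_finite_invariant_union_of_lines
    (A : Matrix (Fin 2) (Fin 2) ℝ)
    (h : ∀ l : ℝ, (A - l • (1 : Matrix (Fin 2) (Fin 2) ℝ)).det ≠ 0) :
    ¬∃ S : Finset (Submodule ℝ (Fin 2 → ℝ)), S.Nonempty ∧
      (∀ L ∈ S, Module.finrank ℝ L = 1) ∧
      (∀ t : ℝ, 0 ≤ t → ∀ L ∈ S,
        Submodule.map (Matrix.mulVecLin (NormedSpace.exp (t • A))) L ∈ S) := by
  classical
  rintro ⟨S, ⟨L, hLS⟩, hdim, hinv⟩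
  obtain ⟨v, hvL, hv0⟩ : ∃ v, v ∈ L ∧ v ≠ 0 := by
    apply Submodule.exists_mem_ne_zero_of_ne_bot
    intro hbot
    have := hdim L hLS
    rw [hbot] at this
    simp at this
  set f : ℝ → (Fin 2 → ℝ) := fun t => (NormedSpace.exp (t • A)) *ᵥ v with hf
  have hf0 : f 0 = v := by simp only [hf, zero_smul, NormedSpace.exp_zero, Matrix.one_mulVec]
  have hfc : Continuous f :=
    continuous_iff_continuousAt.mpr fun t => (expDeriv A v t).continuousAt
  -- every value of f lies in a member of S, and f never vanishes
  have hfne : ∀ t : ℝ, f t ≠ 0 := by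
    intro t hft
    have hu : IsUnit (NormedSpace.exp (t • A)).det :=
      (Matrix.isUnit_iff_isUnit_det _).mp (Matrix.isUnit_exp (t • A))
    have : (NormedSpace.exp (t • A)).det = 0 :=
      (Matrix.exists_mulVec_eq_zero_iff).mp ⟨v, hv0, hft⟩
    rw [this] at hu
    exact (isUnit_iff_ne_zero.mp hu) rfl
  have hmem : ∀ t : ℝ, 0 ≤ t → ∃ M ∈ S, f t ∈ M := by
    intro t ht
    refine ⟨Submodule.map (Matrix.mulVecLin (NormedSpace.exp (t • A))) L,
      hinv t ht L hLS, ?_⟩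
    exact Submodule.mem_map_of_mem hvL
  -- connectedness: f stays in L on [0, ∞)
  set C : Set (Fin 2 → ℝ) := ⋃ M ∈ S.erase L, (M : Set (Fin 2 → ℝ)) with hC
  have hCclosed : IsClosed C := by
    apply (S.erase L).finite_toSet.isClosed_biUnion
    intro M _
    exact M.closed_of_finiteDimensional
  have hT1 : IsClosed (f ⁻¹' (L : Set (Fin 2 → ℝ))) :=
    L.closed_of_finiteDimensional.preimage hfc
  have hT2 : IsClosed (f ⁻¹' C) := hCclosed.preimage hfc
  have hcover : Ici (0:ℝ) ⊆ f ⁻¹' (L : Set (Fin 2 → ℝ)) ∪ f ⁻¹' C := by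
    intro t ht
    obtain ⟨M, hMS, hfM⟩ := hmem t ht
    by_cases hML : M = L
    · exact Or.inl (by simpa [hML] using hfM)
    · exact Or.inr (Set.mem_biUnion (Finset.mem_erase.mpr ⟨hML, hMS⟩) hfM)
  have hdisj : Ici (0:ℝ) ∩ (f ⁻¹' (L : Set (Fin 2 → ℝ)) ∩ f ⁻¹' C) = ∅ := by
    ext t
    simp only [Set.mem_inter_iff, Set.mem_preimage, Set.mem_empty_iff_false, iff_false, not_and]
    intro _ hfL hfC
    obtain ⟨M, hMmem, hfM⟩ := by
      simpa only [hC, Set.mem_iUnion, SetLike.mem_coe, exists_prop] using hfC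
    have hML : M ≠ L := (Finset.mem_erase.mp hMmem).1
    exact hfne t (distinct_lines_inf (hdim L hLS) (hdim M (Finset.mem_erase.mp hMmem).2)
      (Ne.symm hML) hfL hfM)
  have hfL : ∀ t : ℝ, 0 ≤ t → f t ∈ L := by
    have hpc : IsPreconnected (Ici (0:ℝ)) := isPreconnected_Ici
    rw [isPreconnected_closed_iff] at hpc
    by_contra hcon
    push_neg at hcon
    obtain ⟨t1, ht1, ht1L⟩ := hcon
    have hne1 : (Ici (0:ℝ) ∩ f ⁻¹' (L : Set (Fin 2 → ℝ))).Nonempty :=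
      ⟨0, Set.self_mem_Ici, by simpa [hf0] using hvL⟩
    have hne2 : (Ici (0:ℝ) ∩ f ⁻¹' C).Nonempty := by
      refine ⟨t1, ht1, ?_⟩
      rcases hcover ht1 with hc | hc
      · exact absurd hc ht1L
      · exact hc
    obtain ⟨t2, ht2⟩ := hpc _ _ hT1 hT2 hcover hne1 hne2
    have : t2 ∈ Ici (0:ℝ) ∩ (f ⁻¹' (L : Set (Fin 2 → ℝ)) ∩ f ⁻¹' C) := ht2
    rw [hdisj] at this
    exact this
  -- derivative of f at 0 lies in L, giving a real eigenvalue
  have hd0 : HasDerivWithinAt f (A *ᵥ v) (Ioi (0:ℝ)) 0 := by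
    have := (expDeriv A v 0).hasDerivWithinAt (s := Ioi (0:ℝ))
    simpa only [hf, zero_smul, NormedSpace.exp_zero, one_mul] using this
  have hAvL : A *ᵥ v ∈ L := by
    have hts := (hasDerivWithinAt_iff_tendsto_slope' (notMem_Ioi_self)).mp hd0
    refine L.closed_of_finiteDimensional.mem_of_tendsto hts ?_
    filter_upwards [self_mem_nhdsWithin] with t ht
    exact L.smul_mem _ (L.sub_mem (hfL t (le_of_lt ht)) (hf0 ▸ hfL 0 le_rfl))
  -- L = span {v}
  have hLspan : L = Submodule.span ℝ {v} := by
    refine (Submodule.eq_of_le_of_finrank_le ((Submodule.span_singleton_le_iff_mem v L).mpr hvL)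
      ?_).symm
    rw [hdim L hLS, finrank_span_singleton hv0]
  obtain ⟨c, hc⟩ : ∃ c : ℝ, A *ᵥ v = c • v := by
    have := hLspan ▸ hAvL
    exact (Submodule.mem_span_singleton.mp this).imp fun c h => h.symm
  apply h c
  apply Matrix.exists_mulVec_eq_zero_iff.mp
  refine ⟨v, hv0, ?_⟩
  rw [Matrix.sub_mulVec, hc, Matrix.smul_mulVec, Matrix.one_mulVec, sub_self]
end
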